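/- Let p be a prime and d ≥ 1 an integer with p > d + 1. Let γ : ℕ → ℤ be a sequence such that γ_i ≠ 0 for some i ∈ {0, …, d−1}; set m = min_{0 ≤ i ≤ d−1} v_p(γ_i), and assume v_p(γ_k) ≥ m for all k ∈ ℕ. Then: (i) for every k ≥ d, the rational number p^k γ_k / k! is either zero or has p-adic valuation strictly greater than m + d − 1; (ii) min_{0 ≤ k ≤ d−1} v_p(p^k γ_k / k!) = min_{0 ≤ k ≤ d−1} v_p(p^k γ_k) ≤ m + d − 1. Consequently, the infimum over all k ∈ ℕ of v_p(p^k γ_k / k!) is attained at some index k ≤ d − 1, it equals min_{0 ≤ k ≤ d−1} v_p(p^k γ_k), and every index attaining this infimum is at most d − 1. -/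

import Mathlib

open Finset

/-- The additive `p`-adic valuation on `ℚ_p`, with values in `WithTop ℤ` (`v_p 0 = ∞`). -/
noncomputable def vP (p : ℕ) [Fact p.Prime] (x : ℚ_[p]) : WithTop ℤ :=
  Padic.addValuation x

lemma vP_zero (p : ℕ) [Fact p.Prime] : vP p 0 = ⊤ := by
  simp [vP, AddValuation.map_zero]

lemma vP_apply (p : ℕ) [Fact p.Prime] {x : ℚ_[p]} (hx : x ≠ 0) :
    vP p x = (x.valuation : WithTop ℤ) := Padic.addValuation.apply hx

lemma factorial_val_le (p d : ℕ) [hp : Fact p.Prime] (hd : 1 ≤ d) (hpd : d + 1 < p)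
    {k : ℕ} (hk : d ≤ k) : padicValNat p (Nat.factorial k) + d ≤ k := by
  by_cases hkp : k < p
  · have : ¬ p ∣ Nat.factorial k := fun h =>
      absurd (Nat.Prime.dvd_factorial hp.out |>.mp h) (by omega)
    rw [padicValNat.eq_zero_of_not_dvd this]
    omega
  · push_neg at hkp
    have hleg := sub_one_mul_padicValNat_factorial (p := p) k
    have hk0 : k ≠ 0 := by omega
    have hnil : p.digits k ≠ [] := Nat.digits_ne_nil_iff_ne_zero.mpr hk0
    have hlast := Nat.getLast_digit_ne_zero p hk0
    have hs : 1 ≤ (p.digits k).sum := by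
      calc 1 ≤ (p.digits k).getLast hnil := Nat.one_le_iff_ne_zero.mpr hlast
        _ ≤ (p.digits k).sum := List.single_le_sum (fun x _ => Nat.zero_le x) _
          (List.getLast_mem hnil)
    have hsum_le := Nat.digit_sum_le p k
    set v := padicValNat p (Nat.factorial k) with hv
    by_contra hcon
    push_neg at hcon
    have hc1 : (k : ℤ) - d + 1 ≤ v := by omega
    have hc2 : ((d : ℤ) + 1) * ((k : ℤ) - d + 1) ≤ ((p : ℤ) - 1) * ((k : ℤ) - d + 1) :=
      mul_le_mul_of_nonneg_right (by omega) (by omega)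
    have hc3 : ((p : ℤ) - 1) * ((k : ℤ) - d + 1) ≤ ((p : ℤ) - 1) * v :=
      mul_le_mul_of_nonneg_left hc1 (by omega)
    have hnat : (p - 1) * v ≤ k - 1 := by omega
    have hc4 : ((p : ℤ) - 1) * v ≤ (k : ℤ) - 1 := by
      zify [hp.out.one_le, show 1 ≤ k by omega] at hnat
      exact hnat
    nlinarith [mul_nonneg (by omega : (0:ℤ) ≤ (d:ℤ)) (by omega : (0:ℤ) ≤ (k:ℤ) - d)]

theorem valuation_min_attained_below_d (p d : ℕ) [hp : Fact p.Prime]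
    (hd : 1 ≤ d) (hpd : d + 1 < p) (γ : ℕ → ℤ)
    (hne : ∃ i < d, γ i ≠ 0) (m : ℤ)
    (hm_le : ∀ i < d, (m : WithTop ℤ) ≤ vP p ((γ i : ℚ_[p])))
    (hm_eq : ∃ i < d, vP p ((γ i : ℚ_[p])) = (m : WithTop ℤ))
    (hall : ∀ k : ℕ, (m : WithTop ℤ) ≤ vP p ((γ k : ℚ_[p]))) :
    (∀ k : ℕ, d ≤ k → γ k = 0 ∨
      ((m + d - 1 : ℤ) : WithTop ℤ) <
        vP p ((p : ℚ_[p]) ^ k * (γ k : ℚ_[p]) / (Nat.factorial k : ℚ_[p]))) ∧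
    ((Finset.range d).inf
        (fun k => vP p ((p : ℚ_[p]) ^ k * (γ k : ℚ_[p]) / (Nat.factorial k : ℚ_[p]))) =
      (Finset.range d).inf (fun k => vP p ((p : ℚ_[p]) ^ k * (γ k : ℚ_[p])))) ∧
    ((Finset.range d).inf (fun k => vP p ((p : ℚ_[p]) ^ k * (γ k : ℚ_[p]))) ≤
      ((m + d - 1 : ℤ) : WithTop ℤ)) ∧
    (∃ k₀ < d,
      (∀ k : ℕ, vP p ((p : ℚ_[p]) ^ k₀ * (γ k₀ : ℚ_[p]) / (Nat.factorial k₀ : ℚ_[p])) ≤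
          vP p ((p : ℚ_[p]) ^ k * (γ k : ℚ_[p]) / (Nat.factorial k : ℚ_[p]))) ∧
      (vP p ((p : ℚ_[p]) ^ k₀ * (γ k₀ : ℚ_[p]) / (Nat.factorial k₀ : ℚ_[p])) =
        (Finset.range d).inf (fun k => vP p ((p : ℚ_[p]) ^ k * (γ k : ℚ_[p])))) ∧
      (∀ k : ℕ, vP p ((p : ℚ_[p]) ^ k * (γ k : ℚ_[p]) / (Nat.factorial k : ℚ_[p])) =
          vP p ((p : ℚ_[p]) ^ k₀ * (γ k₀ : ℚ_[p]) / (Nat.factorial k₀ : ℚ_[p])) → k < d)) := by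
  have hp1 : (1 : ℕ) < p := hp.out.one_lt
  -- basic computations
  have hγval : ∀ k : ℕ, γ k ≠ 0 → vP p ((γ k : ℚ_[p])) = ((padicValInt p (γ k) : ℤ) : WithTop ℤ) := by
    intro k hk
    rw [vP_apply p (by exact_mod_cast hk), Padic.valuation_intCast]
  have hF0 : ∀ k : ℕ, γ k = 0 →
      vP p ((p : ℚ_[p]) ^ k * (γ k : ℚ_[p]) / (Nat.factorial k : ℚ_[p])) = ⊤ := by
    intro k hk; rw [hk]; simp [vP_zero]
  have hG0 : ∀ k : ℕ, γ k = 0 →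
      vP p ((p : ℚ_[p]) ^ k * (γ k : ℚ_[p])) = ⊤ := by
    intro k hk; rw [hk]; simp [vP_zero]
  have hFne : ∀ k : ℕ, γ k ≠ 0 →
      vP p ((p : ℚ_[p]) ^ k * (γ k : ℚ_[p]) / (Nat.factorial k : ℚ_[p])) =
        (((k : ℤ) + padicValInt p (γ k) - padicValNat p (Nat.factorial k) : ℤ) : WithTop ℤ) := by
    intro k hk
    have hq : ((p : ℚ)) ^ k * (γ k : ℚ) ≠ 0 := by
      apply mul_ne_zero (pow_ne_zero _ (by exact_mod_cast hp.out.ne_zero))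
      exact_mod_cast hk
    have hfac : ((Nat.factorial k : ℚ)) ≠ 0 := by exact_mod_cast (Nat.factorial_ne_zero k)
    have hcast : ((p : ℚ_[p]) ^ k * (γ k : ℚ_[p]) / (Nat.factorial k : ℚ_[p])) =
        (((p : ℚ) ^ k * (γ k : ℚ) / (Nat.factorial k : ℚ) : ℚ) : ℚ_[p]) := by push_cast; ring
    have hint : padicValRat p ((p : ℚ) ^ k * (γ k : ℚ) / (Nat.factorial k : ℚ)) =
        (k : ℤ) + padicValInt p (γ k) - padicValNat p (Nat.factorial k) := by
      rw [padicValRat.div (p := p) hq hfac,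
        padicValRat.mul (p := p) (pow_ne_zero _ (by exact_mod_cast hp.out.ne_zero))
          (by exact_mod_cast hk),
        padicValRat.pow (p := p) (p : ℚ),
        padicValRat.self hp1, padicValRat.of_int, padicValRat.of_nat]
      ring
    rw [hcast, vP_apply p (by exact_mod_cast div_ne_zero hq hfac), Padic.valuation_ratCast, hint]
  have hGne : ∀ k : ℕ, γ k ≠ 0 →
      vP p ((p : ℚ_[p]) ^ k * (γ k : ℚ_[p])) =
        (((k : ℤ) + padicValInt p (γ k) : ℤ) : WithTop ℤ) := by
    intro k hk
    have hq : ((p : ℚ)) ^ k * (γ k : ℚ) ≠ 0 := by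
      apply mul_ne_zero (pow_ne_zero _ (by exact_mod_cast hp.out.ne_zero))
      exact_mod_cast hk
    have hcast : ((p : ℚ_[p]) ^ k * (γ k : ℚ_[p])) =
        (((p : ℚ) ^ k * (γ k : ℚ) : ℚ) : ℚ_[p]) := by push_cast; ring
    have hint : padicValRat p ((p : ℚ) ^ k * (γ k : ℚ)) =
        (k : ℤ) + padicValInt p (γ k) := by
      rw [padicValRat.mul (p := p) (pow_ne_zero _ (by exact_mod_cast hp.out.ne_zero))
          (by exact_mod_cast hk),
        padicValRat.pow (p := p) (p : ℚ),
        padicValRat.self hp1, padicValRat.of_int]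
      ring
    rw [hcast, vP_apply p (by exact_mod_cast hq), Padic.valuation_ratCast, hint]
  have hmle : ∀ k : ℕ, γ k ≠ 0 → m ≤ padicValInt p (γ k) := by
    intro k hk
    have := hall k
    rw [hγval k hk] at this
    exact_mod_cast this
  -- factorial valuation is 0 below d
  have hfac0 : ∀ k < d, padicValNat p (Nat.factorial k) = 0 := by
    intro k hk
    apply padicValNat.eq_zero_of_not_dvd
    intro h
    have := (Nat.Prime.dvd_factorial hp.out).mp h
    omega
  -- part (i)
  have part1 : ∀ k : ℕ, d ≤ k → γ k = 0 ∨
      ((m + d - 1 : ℤ) : WithTop ℤ) <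
        vP p ((p : ℚ_[p]) ^ k * (γ k : ℚ_[p]) / (Nat.factorial k : ℚ_[p])) := by
    intro k hk
    by_cases h : γ k = 0
    · exact Or.inl h
    · right
      rw [hFne k h]
      have h1 := hmle k h
      have h2 := factorial_val_le p d hd hpd hk
      exact WithTop.coe_lt_coe.mpr (by omega)
  -- F = G on range d
  have hFG : ∀ k < d, vP p ((p : ℚ_[p]) ^ k * (γ k : ℚ_[p]) / (Nat.factorial k : ℚ_[p])) =
      vP p ((p : ℚ_[p]) ^ k * (γ k : ℚ_[p])) := by
    intro k hk
    by_cases h : γ k = 0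
    · rw [hF0 k h, hG0 k h]
    · rw [hFne k h, hGne k h, hfac0 k hk]; norm_num
  have part2 : (Finset.range d).inf
        (fun k => vP p ((p : ℚ_[p]) ^ k * (γ k : ℚ_[p]) / (Nat.factorial k : ℚ_[p]))) =
      (Finset.range d).inf (fun k => vP p ((p : ℚ_[p]) ^ k * (γ k : ℚ_[p]))) := by
    apply Finset.inf_congr rfl
    intro k hk
    exact hFG k (Finset.mem_range.mp hk)
  -- part (iii)
  obtain ⟨i, hid, hieq⟩ := hm_eq
  have hγi : γ i ≠ 0 := by
    intro h
    rw [h] at hieq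
    simp [vP_zero] at hieq
  have hvi : (padicValInt p (γ i) : ℤ) = m := by
    have := hieq
    rw [hγval i hγi] at this
    exact_mod_cast this
  have part3 : (Finset.range d).inf (fun k => vP p ((p : ℚ_[p]) ^ k * (γ k : ℚ_[p]))) ≤
      ((m + d - 1 : ℤ) : WithTop ℤ) := by
    refine le_trans (Finset.inf_le (Finset.mem_range.mpr hid)) ?_
    rw [hGne i hγi, hvi]
    exact WithTop.coe_le_coe.mpr (by omega)
  refine ⟨part1, part2, part3, ?_⟩
  -- attainment
  obtain ⟨k₀, hk₀mem, hk₀⟩ := Finset.exists_mem_eq_inf (Finset.range d)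
    (Finset.nonempty_range_iff.mpr (by omega)) (fun k => vP p ((p : ℚ_[p]) ^ k * (γ k : ℚ_[p])))
  have hk₀d : k₀ < d := Finset.mem_range.mp hk₀mem
  have hFk₀ : vP p ((p : ℚ_[p]) ^ k₀ * (γ k₀ : ℚ_[p]) / (Nat.factorial k₀ : ℚ_[p])) =
      (Finset.range d).inf (fun k => vP p ((p : ℚ_[p]) ^ k * (γ k : ℚ_[p]))) := by
    rw [hFG k₀ hk₀d, ← hk₀]
  have hFk₀le : vP p ((p : ℚ_[p]) ^ k₀ * (γ k₀ : ℚ_[p]) / (Nat.factorial k₀ : ℚ_[p])) ≤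
      ((m + d - 1 : ℤ) : WithTop ℤ) := hFk₀ ▸ part3
  refine ⟨k₀, hk₀d, ?_, hFk₀, ?_⟩
  · intro k
    by_cases hk : k < d
    · rw [hFG k hk, hFk₀]
      exact Finset.inf_le (Finset.mem_range.mpr hk)
    · push_neg at hk
      rcases part1 k hk with h | h
      · rw [hF0 k h]; exact le_top
      · exact le_of_lt (lt_of_le_of_lt hFk₀le h)
  · intro k hkeq
    by_contra hk
    push_neg at hk
    rcases part1 k hk with h | h
    · rw [hF0 k h] at hkeq
      have : vP p ((p : ℚ_[p]) ^ k₀ * (γ k₀ : ℚ_[p]) / (Nat.factorial k₀ : ℚ_[p])) < ⊤ :=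
        lt_of_le_of_lt hFk₀le (WithTop.coe_lt_top _)
      exact absurd hkeq.symm (ne_of_lt this)
    · rw [hkeq] at h
      exact absurd (lt_of_le_of_lt hFk₀le h) (lt_irrefl _)
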